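/- (Rotating frame with harmonic natural frequencies.) Let A be a real n × p matrix and B a real q × n matrix, and let h ∈ ℝⁿ satisfy Aᵀ·h = 0 and B·h = 0 (h is harmonic). If θ : ℝ → ℝⁿ satisfies, for every t, the simplicial Kuramoto equation θ'(t) = −A·sin(Aᵀ·θ(t)) − Bᵀ·sin(B·θ(t)), then φ(t) := θ(t) − t·h satisfies, for every t, the equation with harmonic linear frustration φ'(t) = −h − A·sin(Aᵀ·φ(t)) − Bᵀ·sin(B·φ(t)). -/

import Mathlib

open Matrix

/-- Rotating frame with harmonic natural frequencies: if `θ` solves the simplicial Kuramoto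
equation and `h` is harmonic, then `φ(t) = θ(t) − t·h` solves the equation with harmonic
linear frustration `h`. -/
theorem rotating_frame_harmonic (n p q : ℕ)
    (A : Matrix (Fin n) (Fin p) ℝ) (B : Matrix (Fin q) (Fin n) ℝ)
    (h : Fin n → ℝ) (hAh : Aᵀ *ᵥ h = 0) (hBh : B *ᵥ h = 0)
    (θ : ℝ → (Fin n → ℝ))
    (hθ : ∀ t : ℝ, HasDerivAt θ
      (-(A *ᵥ fun i => Real.sin ((Aᵀ *ᵥ θ t) i)) -
        Bᵀ *ᵥ fun j => Real.sin ((B *ᵥ θ t) j)) t) :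
    ∀ t : ℝ, HasDerivAt (fun s => θ s - s • h)
      (-h - (A *ᵥ fun i => Real.sin ((Aᵀ *ᵥ (θ t - t • h)) i)) -
        Bᵀ *ᵥ fun j => Real.sin ((B *ᵥ (θ t - t • h)) j)) t := by
  intro t
  have hA : Aᵀ *ᵥ (θ t - t • h) = Aᵀ *ᵥ θ t := by
    simp [Matrix.mulVec_sub, Matrix.mulVec_smul, hAh]
  have hB : B *ᵥ (θ t - t • h) = B *ᵥ θ t := by
    simp [Matrix.mulVec_sub, Matrix.mulVec_smul, hBh]
  have hd : HasDerivAt (fun s : ℝ => s • h) h t := by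
    simpa using (hasDerivAt_id t).smul_const h
  have := (hθ t).sub hd
  rw [hA, hB]
  exact this.congr_deriv (by abel)
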